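/- arXiv:1805.08532 — 6 statements merged into one kernel-verified Lean document; each statement's English description precedes it below -/
import Mathlib

section
/- A matrix A over a field K is MDS (i.e., the code generated by (I | A) is maximum-distance separable) if and only if every square submatrix of A is invertible. -/
/-- A matrix `A` over a field `K` is MDS (the code generated by `(I | A)` is
maximum-distance separable, i.e. every nonzero codeword `(x, x·A)` has Hamming
weight at least `k+1`) if and only if every square submatrix of `A` is invertible. -/
theorem stmt0 {K : Type*} [Field K] [DecidableEq K] {k : ℕ}
    (A : Matrix (Fin k) (Fin k) K) :
    (∀ x : Fin k → K, x ≠ 0 →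
      (Finset.univ.filter fun i => x i ≠ 0).card +
        (Finset.univ.filter fun j => Matrix.vecMul x A j ≠ 0).card ≥ k + 1) ↔
    (∀ (s : ℕ) (r c : Fin s → Fin k), Function.Injective r → Function.Injective c →
      (A.submatrix r c).det ≠ 0) := by
  constructor
  · -- MDS → all square submatrices invertible
    intro hMDS s r c hr hc hdet
    obtain ⟨y, hy0, hy⟩ := Matrix.exists_vecMul_eq_zero_iff.mpr hdet
    set x : Fin k → K := fun i => ∑ i', if r i' = i then y i' else 0 with hxdef
    have hxr : ∀ i', x (r i') = y i' := by
      intro i'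
      simp only [hxdef]
      rw [Finset.sum_eq_single i']
      · simp
      · intro b _ hb
        simp only [ite_eq_right_iff]
        intro h; exact absurd (hr h) hb
      · simp
    have hxnot : ∀ i, (¬ ∃ i', r i' = i) → x i = 0 := by
      intro i hi
      simp only [hxdef]
      apply Finset.sum_eq_zero
      intro b _
      simp only [ite_eq_right_iff]
      intro hb; exact absurd ⟨b, hb⟩ hi
    have hxne : x ≠ 0 := by
      obtain ⟨i', hi'⟩ := Function.ne_iff.mp hy0
      intro h
      apply hi'
      rw [← hxr i', h]; rfl
    have hzero : ∀ j, Matrix.vecMul x A (c j) = 0 := by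
      intro j
      have hkey : Matrix.vecMul x A (c j) = Matrix.vecMul y (A.submatrix r c) j := by
        simp only [Matrix.vecMul, dotProduct, Matrix.submatrix_apply]
        simp only [← hxr]
        rw [← Finset.sum_image (f := fun i => x i * A i (c j))
          (g := r) (by intro a _ b _ h; exact hr h)]
        apply (Finset.sum_subset (Finset.subset_univ _) ?_).symm
        intro i _ hi
        have hxi : x i = 0 := by
          apply hxnot
          intro ⟨i', hi'⟩
          exact hi (Finset.mem_image.mpr ⟨i', Finset.mem_univ _, hi'⟩)
        simp [hxi]
      rw [hkey, hy]; rfl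
    have h1 : (Finset.univ.filter fun i => x i ≠ 0) ⊆ Finset.univ.image r := by
      intro i hi
      simp only [Finset.mem_filter] at hi
      by_contra hmem
      apply hi.2
      apply hxnot
      intro ⟨i', hi'⟩
      exact hmem (Finset.mem_image.mpr ⟨i', Finset.mem_univ _, hi'⟩)
    have h2 : (Finset.univ.filter fun j => Matrix.vecMul x A j ≠ 0) ⊆
        Finset.univ \ Finset.univ.image c := by
      intro j hj
      simp only [Finset.mem_filter] at hj
      rw [Finset.mem_sdiff]
      refine ⟨Finset.mem_univ _, ?_⟩
      intro hmem
      obtain ⟨j', _, hj'⟩ := Finset.mem_image.mp hmem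
      exact hj.2 (hj' ▸ hzero j')
    have hcard1 : (Finset.univ.filter fun i => x i ≠ 0).card ≤ s := by
      calc _ ≤ (Finset.univ.image r).card := Finset.card_le_card h1
        _ ≤ (Finset.univ : Finset (Fin s)).card := Finset.card_image_le
        _ = s := by simp
    have hcimg : (Finset.univ.image c).card = s := by
      rw [Finset.card_image_of_injective _ hc]; simp
    have hcard2 : (Finset.univ.filter fun j => Matrix.vecMul x A j ≠ 0).card ≤ k - s := by
      calc _ ≤ (Finset.univ \ Finset.univ.image c).card := Finset.card_le_card h2
        _ = k - s := by rw [Finset.card_sdiff_of_subset (Finset.subset_univ _), hcimg]; simp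
    have hsk : s ≤ k := by
      simpa using Fintype.card_le_of_injective c hc
    have := hMDS x hxne
    omega
  · -- all square submatrices invertible → MDS
    intro hsub x hx
    by_contra hlt
    push_neg at hlt
    set S := Finset.univ.filter fun i => x i ≠ 0 with hS
    set a := S.card with ha
    have hapos : 0 < a := by
      obtain ⟨i0, hi0⟩ := Function.ne_iff.mp hx
      apply Finset.card_pos.mpr
      exact ⟨i0, Finset.mem_filter.mpr ⟨Finset.mem_univ _, hi0⟩⟩
    -- the zero set of x·A has at least a elements
    set Z := Finset.univ.filter fun j => Matrix.vecMul x A j = 0 with hZ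
    have hZcard : a ≤ Z.card := by
      have hcompl : Z.card + (Finset.univ.filter fun j => Matrix.vecMul x A j ≠ 0).card = k := by
        rw [hZ]
        have := Finset.card_filter_add_card_filter_not
          (s := (Finset.univ : Finset (Fin k)))
          (p := fun j => Matrix.vecMul x A j = 0)
        simpa using this
      omega
    obtain ⟨T, hTZ, hT⟩ := Finset.exists_subset_card_eq hZcard
    have hTk : ∀ j ∈ T, Matrix.vecMul x A j = 0 := by
      intro j hj
      have := hTZ hj
      rw [hZ, Finset.mem_filter] at this
      exact this.2
    -- row and column selections
    set r : Fin a → Fin k := fun i => (S.orderIsoOfFin rfl i : Fin k) with hrdef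
    set c : Fin a → Fin k := fun j => (T.orderIsoOfFin hT j : Fin k) with hcdef
    have hrinj : Function.Injective r := by
      intro i j h
      exact (S.orderIsoOfFin rfl).injective (Subtype.ext h)
    have hcinj : Function.Injective c := by
      intro i j h
      exact (T.orderIsoOfFin hT).injective (Subtype.ext h)
    apply hsub a r c hrinj hcinj
    rw [← Matrix.exists_vecMul_eq_zero_iff]
    refine ⟨fun i => x (r i), ?_, ?_⟩
    · intro h
      have h0 : x (r ⟨0, hapos⟩) = 0 := congrFun h ⟨0, hapos⟩
      have hmem : r ⟨0, hapos⟩ ∈ S := (S.orderIsoOfFin rfl ⟨0, hapos⟩).2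
      rw [hS, Finset.mem_filter] at hmem
      exact hmem.2 h0
    · funext j
      have hsum : ∀ jj : Fin k, ∑ i : Fin a, x (r i) * A (r i) jj
          = ∑ i : Fin k, x i * A i jj := by
        intro jj
        rw [← Finset.sum_image (f := fun i => x i * A i jj) (g := r)
          (by intro p _ q _ h; exact hrinj h)]
        have himg : Finset.univ.image r = S := by
          ext i
          simp only [Finset.mem_image, Finset.mem_univ, true_and]
          constructor
          · rintro ⟨i', rfl⟩
            exact (S.orderIsoOfFin rfl i').2
          · intro hi
            obtain ⟨i', hi'⟩ := (S.orderIsoOfFin rfl).surjective ⟨i, hi⟩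
            exact ⟨i', congrArg Subtype.val hi'⟩
        rw [himg]
        apply Finset.sum_subset (Finset.subset_univ _)
        intro i _ hi
        rw [hS, Finset.mem_filter] at hi
        push_neg at hi
        rw [hi (Finset.mem_univ _), zero_mul]
      have : Matrix.vecMul (fun i => x (r i)) (A.submatrix r c) j
          = Matrix.vecMul x A (c j) := by
        simp only [Matrix.vecMul, dotProduct, Matrix.submatrix_apply]
        exact hsum (c j)
      rw [this]
      have : c j ∈ T := (T.orderIsoOfFin hT j).2
      simp [hTk _ this]
end

section
/- Let x_1,...,x_d, y_1,...,y_d be 2d distinct non-zero elements of a field K, and define A ∈ K^{d×d} by A_{i,j} = x_i/(x_i - y_j). Then every square submatrix of the (d+1)×d matrix obtained by prepending a row of all ones to A is invertible. -/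
open Polynomial Finset


/-- Let `x_1,…,x_d, y_1,…,y_d` be `2d` distinct non-zero field elements and
`A_{i,j} = x_i / (x_i - y_j)`. Then every square submatrix of the `(d+1)×d`
matrix `γ` obtained by prepending a row of all ones to `A` is invertible. -/
theorem stmt2 {K : Type*} [Field K] {d : ℕ} (hd : 1 ≤ d) (x y : Fin d → K)
    (hx0 : ∀ i, x i ≠ 0) (hy0 : ∀ i, y i ≠ 0)
    (hdist : Function.Injective (Sum.elim x y)) :
    ∀ (s : ℕ) (r : Fin s → Fin (d + 1)) (c : Fin s → Fin d),
      Function.Injective r → Function.Injective c →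
      ((Matrix.of fun i j =>
          Fin.cases (motive := fun _ => K) 1
            (fun i' => x i' * (x i' - y j)⁻¹) i).submatrix r c).det ≠ 0 := by
  classical
  -- basic injectivity facts
  have hxinj : Function.Injective x := fun a b h => by
    have := hdist (show Sum.elim x y (Sum.inl a) = Sum.elim x y (Sum.inl b) by simpa using h)
    simpa using this
  have hyinj : Function.Injective y := fun a b h => by
    have := hdist (show Sum.elim x y (Sum.inr a) = Sum.elim x y (Sum.inr b) by simpa using h)
    simpa using this
  have hxy : ∀ i j, x i ≠ y j := by
    intro i j h
    have := hdist (show Sum.elim x y (Sum.inl i) = Sum.elim x y (Sum.inr j) by simpa using h)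
    simp at this
  intro s r c hr hc hdet
  rw [← Matrix.exists_mulVec_eq_zero_iff] at hdet
  obtain ⟨v, hv, hmul⟩ := hdet
  set Y : Fin s → K := fun j => y (c j) with hY
  have hYinj : Function.Injective Y := fun a b h => hc (hyinj h)
  have hYsub : ∀ (t : K) (j : Fin s), t - Y j ≠ 0 → 
      ∏ k ∈ univ.erase j, (t - Y k) = (t - Y j)⁻¹ * ∏ k, (t - Y k) := by
    intro t j hj
    rw [← Finset.mul_prod_erase univ (fun k => (t - Y k)) (mem_univ j)]
    field_simp
  set P : K[X] := ∑ j : Fin s, C (v j) * (X * ∏ k ∈ univ.erase j, (X - C (Y k))) with hP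
  -- the mulVec equations
  have hrow : ∀ i : Fin s, ∑ j, (Matrix.of fun i j =>
      Fin.cases (motive := fun _ => K) 1 (fun i' => x i' * (x i' - y j)⁻¹) i)
      (r i) (c j) * v j = 0 := by
    intro i
    have := congrFun hmul i
    simpa [Matrix.mulVec, dotProduct] using this
  -- eval of P
  have hPeval : ∀ t : K, P.eval t = ∑ j, v j * (t * ∏ k ∈ univ.erase j, (t - Y k)) := by
    intro t
    simp [hP, eval_finset_sum, eval_prod]
  have hPzero : P.eval 0 = 0 := by
    have hs : ∀ j : Fin s, v j * (0 * ∏ k ∈ univ.erase j, (0 - Y k)) = 0 := by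
      intro j; ring
    rw [hPeval]; simp
  -- eval at x-values in the rows
  have hPevalx : ∀ (i : Fin s) (i' : Fin d), r i = i'.succ → P.eval (x i') = 0 := by
    intro i i' hri
    have hcond : ∑ j, (x i' * (x i' - Y j)⁻¹) * v j = 0 := by
      have := hrow i
      rw [hri] at this
      simpa using this
    rw [hPeval]
    have : ∀ j : Fin s, v j * (x i' * ∏ k ∈ univ.erase j, (x i' - Y k))
        = (∏ k, (x i' - Y k)) * ((x i' * (x i' - Y j)⁻¹) * v j) := by
      intro j
      rw [hYsub (x i') j (sub_ne_zero.mpr (hxy i' (c j)))]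
      ring
    rw [Finset.sum_congr rfl (fun j _ => this j), ← Finset.mul_sum, hcond, mul_zero]
  -- degree facts
  have hq : ∀ j : Fin s, (X * ∏ k ∈ univ.erase j, (X - C (Y k)) : K[X]).Monic ∧
      (X * ∏ k ∈ univ.erase j, (X - C (Y k)) : K[X]).natDegree = s := by
    intro j
    have hm : (∏ k ∈ univ.erase j, (X - C (Y k)) : K[X]).Monic :=
      monic_prod_of_monic _ _ (fun k _ => monic_X_sub_C _)
    have hmm : (X * ∏ k ∈ univ.erase j, (X - C (Y k)) : K[X]).Monic :=
      monic_X.mul hm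
    refine ⟨hmm, ?_⟩
    have hs1 : 0 < s := j.pos
    rw [natDegree_mul X_ne_zero hm.ne_zero, natDegree_X, natDegree_prod]
    · simp only [natDegree_X_sub_C, Finset.sum_const, Finset.card_erase_of_mem (mem_univ j),
        Finset.card_univ, Fintype.card_fin, smul_eq_mul, mul_one]
      omega
    · intro k _; exact X_sub_C_ne_zero _
  have hPdeg : P.natDegree ≤ s := by
    apply Polynomial.natDegree_sum_le_of_forall_le
    intro j _
    calc (C (v j) * (X * ∏ k ∈ univ.erase j, (X - C (Y k)))).natDegree
        ≤ (C (v j)).natDegree + (X * ∏ k ∈ univ.erase j, (X - C (Y k))).natDegree :=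
          natDegree_mul_le
      _ ≤ s := by rw [natDegree_C, (hq j).2]; omega
  have hPcoeff : P.coeff s = ∑ j, v j := by
    rw [hP, finset_sum_coeff]
    apply Finset.sum_congr rfl
    intro j _
    rw [coeff_C_mul]
    have h1 := (hq j).1.coeff_natDegree
    rw [(hq j).2] at h1
    rw [h1, mul_one]
  -- P = 0
  have hP0 : P = 0 := by
    by_contra hP0
    by_cases h0 : ∃ i0, r i0 = 0
    · -- ones row present: sum of v is 0
      obtain ⟨i0, hi0⟩ := h0
      have hsum : ∑ j, v j = 0 := by
        have := hrow i0
        rw [hi0] at this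
        simpa using this
      have hdeg' : P.natDegree < s := by
        rcases lt_or_eq_of_le hPdeg with h | h
        · exact h
        · exfalso
          have hlc := Polynomial.leadingCoeff_ne_zero.mpr hP0
          rw [Polynomial.leadingCoeff, h, hPcoeff] at hlc
          exact hlc hsum
      -- roots: e ∘ r, injective into K
      have heinj : Function.Injective (fun i => Fin.cases (motive := fun _ => K) 0 x (r i)) := by
        intro a b hab
        simp only at hab
        apply hr
        rcases Fin.eq_zero_or_eq_succ (r a) with ha | ⟨a', ha⟩ <;>
          rcases Fin.eq_zero_or_eq_succ (r b) with hb | ⟨b', hb⟩ <;>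
          rw [ha, hb] at hab ⊢ <;>
          simp only [Fin.cases_zero, Fin.cases_succ] at hab
        · exact absurd hab.symm (hx0 b')
        · exact absurd hab (hx0 a')
        · exact congrArg Fin.succ (hxinj hab)
      refine hP0 (Polynomial.eq_zero_of_natDegree_lt_card_of_eval_eq_zero P heinj ?_ ?_)
      · intro i
        show P.eval (Fin.cases (motive := fun _ => K) 0 x (r i)) = 0
        rcases Fin.eq_zero_or_eq_succ (r i) with h | ⟨i', h⟩
        · rw [h]; simpa using hPzero
        · rw [h]; simpa using hPevalx i i' h
      · simpa using hdeg'
    · -- no ones row: all rows give x-values, plus the root 0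
      push_neg at h0
      have hrs : ∀ i : Fin s, ∃ i' : Fin d, r i = i'.succ := by
        intro i
        rcases Fin.eq_zero_or_eq_succ (r i) with h | h
        · exact absurd h (h0 i)
        · exact h
      choose rp hrp using hrs
      have hrpinj : Function.Injective rp := by
        intro a b hab
        apply hr; rw [hrp a, hrp b, hab]
      set g : Fin (s + 1) → K :=
        fun i => Fin.cases (motive := fun _ => K) 0 (fun i => x (rp i)) i with hg
      have hginj : Function.Injective g := by
        intro a b hab
        rcases Fin.eq_zero_or_eq_succ a with ha | ⟨a', ha⟩ <;>
          rcases Fin.eq_zero_or_eq_succ b with hb | ⟨b', hb⟩ <;>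
          subst ha <;> subst hb <;>
          simp only [hg, Fin.cases_zero, Fin.cases_succ] at hab
        · rfl
        · exact absurd hab.symm (hx0 _)
        · exact absurd hab (hx0 _)
        · exact congrArg Fin.succ (hrpinj (hxinj hab))
      refine hP0 (Polynomial.eq_zero_of_natDegree_lt_card_of_eval_eq_zero P hginj ?_ ?_)
      · intro i
        rcases Fin.eq_zero_or_eq_succ i with h | ⟨i', h⟩ <;> subst h
        · simpa [hg] using hPzero
        · simpa [hg] using hPevalx i' (rp i') (hrp i')
      · simpa using Nat.lt_succ_of_le hPdeg
  -- conclude v = 0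
  apply hv
  funext j
  have := hPeval (Y j)
  rw [hP0] at this
  simp only [eval_zero] at this
  have hterm : ∀ j' ∈ univ.erase j, v j' * (Y j * ∏ k ∈ univ.erase j', (Y j - Y k)) = 0 := by
    intro j' hj'
    have hjmem : j ∈ univ.erase j' := by
      simp only [mem_erase, mem_univ, and_true] at hj' ⊢
      exact fun h => hj' h.symm
    rw [Finset.prod_eq_zero hjmem (by ring)]
    ring
  rw [← Finset.sum_erase_add _ _ (mem_univ j), Finset.sum_eq_zero hterm, zero_add] at this
  have hnz : Y j * ∏ k ∈ univ.erase j, (Y j - Y k) ≠ 0 := by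
    apply mul_ne_zero (hy0 _)
    apply Finset.prod_ne_zero_iff.mpr
    intro k hk
    simp only [mem_erase, mem_univ, and_true] at hk
    exact sub_ne_zero.mpr (fun h => hk (hYinj h).symm)
  have := (mul_eq_zero.mp this.symm).resolve_right hnz
  simpa using this
end

section
/- Let x_1,...,x_d, y_1,...,y_d be 2d distinct non-zero elements of a field K, and define A ∈ K^{d×d} by A_{i,j} = x_i/(x_i - y_j). Let C = J - A where J is the all-ones d×d matrix. Then every square submatrix of the (d+1)×d matrix obtained by prepending a row of all ones to C is invertible. -/
open Polynomial in
lemma cauchy_det_ne_zero {K : Type*} [Field K] {n : ℕ} (a b : Fin n → K)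
    (ha : Function.Injective a) (hb : Function.Injective b)
    (hab : ∀ i j, a i ≠ b j) :
    (Matrix.of fun i j : Fin n => (b j - a i)⁻¹).det ≠ 0 := by
  intro hdet
  obtain ⟨v, hv, hmv⟩ := (Matrix.exists_mulVec_eq_zero_iff).2 hdet
  set P : K[X] := ∑ j, Polynomial.C (v j) *
      ∏ k ∈ Finset.univ.erase j, (X - Polynomial.C (b k)) with hP
  have heval : ∀ i, P.eval (a i) = 0 := by
    intro i
    have h0 : ∑ j, (b j - a i)⁻¹ * v j = 0 := by
      have := congrFun hmv i
      simpa [Matrix.mulVec, dotProduct] using this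
    have : P.eval (a i) =
        -(∏ k, (a i - b k)) * ∑ j, (b j - a i)⁻¹ * v j := by
      rw [hP, eval_finset_sum, Finset.mul_sum]
      refine Finset.sum_congr rfl fun j _ => ?_
      have hne : b j - a i ≠ 0 := sub_ne_zero.mpr (Ne.symm (hab i j))
      rw [← Finset.mul_prod_erase _ _ (Finset.mem_univ j)]
      simp only [Polynomial.eval_mul, Polynomial.eval_C, Polynomial.eval_prod,
        Polynomial.eval_sub, Polynomial.eval_X]
      field_simp
      ring
    rw [this, h0, mul_zero]
  have hP0 : P = 0 := by
    rcases Nat.eq_zero_or_pos n with h | h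
    · subst h; simp [hP]
    · apply Polynomial.eq_zero_of_natDegree_lt_card_of_eval_eq_zero P ha heval
      rw [Fintype.card_fin]
      calc P.natDegree ≤ n - 1 := by
            apply Polynomial.natDegree_sum_le_of_forall_le
            intro j _
            refine le_trans (Polynomial.natDegree_C_mul_le _ _) ?_
            refine le_trans (Polynomial.natDegree_prod_le _ _) ?_
            calc ∑ k ∈ Finset.univ.erase j, (X - Polynomial.C (b k)).natDegree
                ≤ ∑ k ∈ Finset.univ.erase j, 1 := by
                  exact Finset.sum_le_sum fun k _ => le_of_eq (Polynomial.natDegree_X_sub_C _)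
              _ = n - 1 := by simp [Finset.card_erase_of_mem]
        _ < n := Nat.sub_lt h one_pos
  apply hv
  funext m
  have := congrArg (Polynomial.eval (b m)) hP0
  rw [hP, eval_finset_sum] at this
  simp only [Polynomial.eval_mul, Polynomial.eval_C, Polynomial.eval_prod,
    Polynomial.eval_sub, Polynomial.eval_X, Polynomial.eval_zero] at this
  rw [Finset.sum_eq_single m] at this
  · have hprod : ∏ k ∈ Finset.univ.erase m, (b m - b k) ≠ 0 := by
      apply Finset.prod_ne_zero_iff.mpr
      intro k hk
      exact sub_ne_zero.mpr fun h => (Finset.mem_erase.mp hk).1 (hb h.symm)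
    simpa [hprod] using this
  · intro j _ hjm
    have : (m : Fin n) ∈ Finset.univ.erase j := Finset.mem_erase.mpr ⟨fun h => hjm h.symm, Finset.mem_univ _⟩
    rw [Finset.prod_eq_zero this (by ring), mul_zero]
  · intro h; exact absurd (Finset.mem_univ m) h

/-- Let `x_1,…,x_d, y_1,…,y_d` be `2d` distinct non-zero field elements,
`A_{i,j} = x_i / (x_i - y_j)`, and `C = J - A` where `J` is the all-ones matrix.
Then every square submatrix of the `(d+1)×d` matrix obtained by prepending a
row of all ones to `C` is invertible. -/
theorem stmt3 {K : Type*} [Field K] {d : ℕ} (hd : 1 ≤ d) (x y : Fin d → K)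
    (hx0 : ∀ i, x i ≠ 0) (hy0 : ∀ i, y i ≠ 0)
    (hdist : Function.Injective (Sum.elim x y)) :
    ∀ (s : ℕ) (r : Fin s → Fin (d + 1)) (c : Fin s → Fin d),
      Function.Injective r → Function.Injective c →
      ((Matrix.of fun i j =>
          Fin.cases (motive := fun _ => K) 1
            (fun i' => 1 - x i' * (x i' - y j)⁻¹) i).submatrix r c).det ≠ 0 := by
  intro s r c hr hc
  have hxinj : Function.Injective x := fun i j h => by
    have := hdist (a₁ := Sum.inl i) (a₂ := Sum.inl j) (by simpa using h)
    simpa using this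
  have hyinj : Function.Injective y := fun i j h => by
    have := hdist (a₁ := Sum.inr i) (a₂ := Sum.inr j) (by simpa using h)
    simpa using this
  have hxy : ∀ i j, x i ≠ y j := fun i j h => by
    have := hdist (a₁ := Sum.inl i) (a₂ := Sum.inr j) (by simpa using h)
    simp at this
  set X : Fin (d + 1) → K := Fin.cons 0 x with hX
  have hXinj : Function.Injective X := by
    rw [hX, Fin.cons_injective_iff]
    exact ⟨fun ⟨i, hi⟩ => hx0 i hi, hxinj⟩
  have hXy : ∀ i j, X i ≠ y j := by
    intro i j
    refine Fin.cases ?_ ?_ i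
    · simpa [hX] using (hy0 j).symm
    · intro i'; simpa [hX] using hxy i' j
  have hentry : ∀ (i : Fin (d+1)) (j : Fin d),
      (Fin.cases (motive := fun _ => K) 1
        (fun i' => 1 - x i' * (x i' - y j)⁻¹) i) = y j * (y j - X i)⁻¹ := by
    intro i j
    refine Fin.cases ?_ ?_ i
    · simp [hX, hy0 j]
    · intro i'
      have h1 : x i' - y j ≠ 0 := sub_ne_zero.mpr (hxy i' j)
      have h2 : y j - x i' ≠ 0 := sub_ne_zero.mpr (Ne.symm (hxy i' j))
      simp only [hX, Fin.cases_succ, Fin.cons_succ]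
      field_simp
      ring
  have heq : ((Matrix.of fun i j =>
        Fin.cases (motive := fun _ => K) 1
          (fun i' => 1 - x i' * (x i' - y j)⁻¹) i).submatrix r c) =
      Matrix.of (fun i j : Fin s => (y (c j)) * ((y (c j) - X (r i))⁻¹)) := by
    ext i j
    exact hentry (r i) (c j)
  rw [heq, Matrix.det_mul_row (fun j => y (c j)) (fun i j : Fin s => (y (c j) - X (r i))⁻¹)]
  refine mul_ne_zero ?_ ?_
  · exact Finset.prod_ne_zero_iff.mpr fun j _ => hy0 (c j)
  · exact cauchy_det_ne_zero (X ∘ r) (y ∘ c) (hXinj.comp hr) (hyinj.comp hc)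
      (fun i j => hXy (r i) (c j))
end

section
/- Let x_1,...,x_{d+1}, y_1,...,y_d be 2d+1 distinct elements of a field K and let A ∈ K^{(d+1)×d} be the Cauchy matrix A_{i,j} = 1/(x_i - y_j). Then the left kernel of A has dimension exactly one, and every non-zero vector in the left kernel of A has all coordinates non-zero (full Hamming weight). -/
open Polynomial Finset in
lemma cauchy_left_ker_triv {K : Type*} [Field K] {n : ℕ} (x y : Fin n → K)
    (hxy : ∀ k j, x k ≠ y j) (hx : Function.Injective x) (hy : Function.Injective y)
    (c : Fin n → K) (hc : ∀ j, ∑ k, c k * (x k - y j)⁻¹ = 0) : c = 0 := by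
  rcases Nat.eq_zero_or_pos n with rfl | hn
  · exact funext fun i => i.elim0
  classical
  set P : K[X] := ∑ k, C (c k) * ∏ l ∈ univ.erase k, (C (x l) - X) with hP
  have hdeg : P.natDegree < n := by
    have : P.natDegree ≤ n - 1 := by
      apply Polynomial.natDegree_sum_le_of_forall_le
      intro k _
      refine le_trans (natDegree_mul_le) ?_
      simp only [natDegree_C, zero_add]
      refine le_trans (Polynomial.natDegree_prod_le _ _) ?_
      have : ∀ l ∈ univ.erase k, ((C (x l) - X : K[X])).natDegree ≤ 1 := by
        intro l _
        have : (C (x l) - X : K[X]) = -(X - C (x l)) := by ring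
        rw [this, natDegree_neg, natDegree_X_sub_C]
      refine le_trans (Finset.sum_le_card_nsmul _ _ 1 this) ?_
      simp [Finset.card_erase_of_mem]
    omega
  have hroot : ∀ j, P.eval (y j) = 0 := by
    intro j
    have key : P.eval (y j) = (∏ l, (x l - y j)) * ∑ k, c k * (x k - y j)⁻¹ := by
      rw [hP]
      simp only [eval_finset_sum, eval_mul, eval_C, eval_prod, eval_sub, eval_X, Finset.mul_sum]
      apply Finset.sum_congr rfl
      intro k _
      rw [← Finset.mul_prod_erase univ (fun l => x l - y j) (mem_univ k)]
      have hne : x k - y j ≠ 0 := sub_ne_zero.mpr (hxy k j)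
      field_simp
    rw [key, hc j, mul_zero]
  have hP0 : P = 0 := by
    apply Polynomial.eq_zero_of_natDegree_lt_card_of_eval_eq_zero P hy hroot
    simpa using hdeg
  funext m
  have hm : P.eval (x m) = c m * ∏ l ∈ univ.erase m, (x l - x m) := by
    rw [hP]
    simp only [eval_finset_sum, eval_mul, eval_C, eval_prod, eval_sub, eval_X]
    rw [Finset.sum_eq_single m]
    · intro k _ hkm
      have : ∏ l ∈ univ.erase k, (x l - x m) = 0 :=
        Finset.prod_eq_zero (Finset.mem_erase.mpr ⟨Ne.symm hkm, mem_univ m⟩) (by ring)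
      rw [this, mul_zero]
    · simp
  have hprod : ∏ l ∈ univ.erase m, (x l - x m) ≠ 0 := by
    apply Finset.prod_ne_zero_iff.mpr
    intro l hl
    exact sub_ne_zero.mpr fun h => (Finset.mem_erase.mp hl).1 (hx h)
  have := hm
  rw [hP0, eval_zero] at this
  have := this.symm
  rcases mul_eq_zero.mp this with h | h
  · exact h
  · exact absurd h hprod

/-- For a `(d+1)×d` Cauchy matrix `A_{i,j} = (x_i - y_j)⁻¹` built from `2d+1`
pairwise distinct elements, the left kernel of `A` has dimension exactly one,
and every non-zero vector of the left kernel has all coordinates non-zero. -/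
theorem stmt4 {K : Type*} [Field K] {d : ℕ} (hd : 1 ≤ d)
    (x : Fin (d + 1) → K) (y : Fin d → K)
    (hdist : Function.Injective (Sum.elim x y)) :
    Module.finrank K
        (LinearMap.ker (Matrix.vecMulLinear
          (Matrix.of fun i j => (x i - y j)⁻¹ : Matrix (Fin (d + 1)) (Fin d) K))) = 1 ∧
    ∀ c : Fin (d + 1) → K,
      Matrix.vecMul c (Matrix.of fun i j => (x i - y j)⁻¹) = 0 → c ≠ 0 →
      ∀ i, c i ≠ 0 := by
  classical
  have hx : Function.Injective x := fun a b h => by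
    have := hdist (a₁ := Sum.inl a) (a₂ := Sum.inl b) (by simpa using h); simpa using this
  have hy : Function.Injective y := fun a b h => by
    have := hdist (a₁ := Sum.inr a) (a₂ := Sum.inr b) (by simpa using h); simpa using this
  have hxy : ∀ a b, x a ≠ y b := fun a b h => by
    have := hdist (a₁ := Sum.inl a) (a₂ := Sum.inr b) (by simpa using h); simp at this
  set A : Matrix (Fin (d + 1)) (Fin d) K := Matrix.of fun i j => (x i - y j)⁻¹ with hA
  -- key: if vecMul c A = 0 and c i = 0 for some i, then c = 0
  have key : ∀ (c : Fin (d + 1) → K) (i : Fin (d + 1)),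
      Matrix.vecMul c A = 0 → c i = 0 → c = 0 := by
    intro c i hker hci
    have hc' : (fun k => c (i.succAbove k)) = 0 := by
      apply cauchy_left_ker_triv (fun k => x (i.succAbove k)) y
        (fun k j => hxy _ j) (fun a b h => Fin.succAbove_right_injective (hx h)) hy
      intro j
      have := congrFun hker j
      simp only [Matrix.vecMul, dotProduct, hA, Matrix.of_apply, Pi.zero_apply] at this
      rw [Fin.sum_univ_succAbove _ i, hci, zero_mul, zero_add] at this
      exact this
    funext k
    rcases eq_or_ne k i with rfl | hk
    · exact hci
    · obtain ⟨j, rfl⟩ := Fin.exists_succAbove_eq hk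
      exact congrFun hc' j
  constructor
  · -- surjectivity of vecMulLinear A
    set B : Matrix (Fin d) (Fin d) K := Matrix.of fun i j => (x i.castSucc - y j)⁻¹ with hB
    have hBinj : Function.Injective B.vecMulLinear := by
      rw [injective_iff_map_eq_zero']
      intro c
      constructor
      · intro h
        apply cauchy_left_ker_triv (fun k : Fin d => x k.castSucc) y
          (fun k j => hxy _ j) (fun a b hab => Fin.castSucc_injective _ (hx hab)) hy
        intro j
        have := congrFun h j
        simpa [Matrix.vecMul, dotProduct, hB] using this
      · intro h; rw [h]; exact map_zero _
    have hBsurj : Function.Surjective B.vecMulLinear :=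
      (LinearMap.injective_iff_surjective).mp hBinj
    have hAsurj : Function.Surjective A.vecMulLinear := by
      intro v
      obtain ⟨c', hc'⟩ := hBsurj v
      refine ⟨Fin.snoc c' 0, ?_⟩
      funext j
      have := congrFun hc' j
      simp only [Matrix.vecMulLinear_apply, Matrix.vecMul, dotProduct, hA, hB,
        Matrix.of_apply] at this ⊢
      rw [Fin.sum_univ_castSucc]
      simpa using this
    have hrange : LinearMap.range A.vecMulLinear = ⊤ := LinearMap.range_eq_top.mpr hAsurj
    have hrn := LinearMap.finrank_range_add_finrank_ker A.vecMulLinear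
    rw [hrange, finrank_top] at hrn
    simp only [Module.finrank_pi, Fintype.card_fin] at hrn
    omega
  · intro c hker hc0 i
    intro hci
    exact hc0 (key c i hker hci)
end

section
/- Let A ∈ K^{n×ℓ} and B ∈ K^{m×ℓ}. Suppose that for every selection P of at most n columns (from the ℓ columns), the matrix product B·P composed with a basis of the right kernel of A·P has at least one zero row. Then for every vector v in the right kernel of A with Hamming weight at most n, the vector B·v has at least one zero coordinate. -/
/-- `Kb` is a kernel basis of `M`: its columns are linearly independent and
span the right kernel of `M`. -/
def IsKernelBasis {K : Type*} [Field K] {n k t : ℕ}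
    (M : Matrix (Fin n) (Fin k) K) (Kb : Matrix (Fin k) (Fin t) K) : Prop :=
  Function.Injective Kb.mulVecLin ∧
    LinearMap.range Kb.mulVecLin = LinearMap.ker M.mulVecLin

/-- safe′(A,B) ⇒ safe(A,B): if for every selection of at most `n` columns the
product of the selected columns of `B` with a kernel basis of the selected
columns of `A` has a zero row, then for every `v ∈ ker A` of Hamming weight at
most `n`, the vector `B·v` has a zero coordinate. -/
theorem stmt6 {K : Type*} [Field K] [DecidableEq K] {n m ℓ : ℕ}
    (A : Matrix (Fin n) (Fin ℓ) K) (B : Matrix (Fin m) (Fin ℓ) K)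
    (h : ∀ (k : ℕ), k ≤ n → ∀ (c : Fin k → Fin ℓ), Function.Injective c →
      ∀ (t : ℕ) (Kb : Matrix (Fin k) (Fin t) K),
        IsKernelBasis (A.submatrix id c) Kb →
        ∃ i, ∀ j, ((B.submatrix id c) * Kb) i j = 0) :
    ∀ v : Fin ℓ → K, A.mulVec v = 0 →
      (Finset.univ.filter fun i => v i ≠ 0).card ≤ n →
      ∃ i, B.mulVec v i = 0 := by
  intro v hv hcard
  set s : Finset (Fin ℓ) := Finset.univ.filter (fun i => v i ≠ 0) with hs
  set k := s.card with hk
  let e := s.orderIsoOfFin rfl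
  let c : Fin k → Fin ℓ := fun j => (e j : Fin ℓ)
  have hc : Function.Injective c := fun a b hab => e.injective (Subtype.ext hab)
  have hzero : ∀ i, i ∉ s → v i = 0 := by
    intro i hi
    by_contra h0
    exact hi (Finset.mem_filter.mpr ⟨Finset.mem_univ _, h0⟩)
  let v' : Fin k → K := fun j => v (c j)
  have key : ∀ {p : ℕ} (M : Matrix (Fin p) (Fin ℓ) K),
      (M.submatrix id c).mulVec v' = M.mulVec v := by
    intro p M
    funext i
    simp only [Matrix.mulVec, dotProduct, Matrix.submatrix_apply, id]
    have h1 : ∑ j : Fin ℓ, M i j * v j = ∑ j ∈ s, M i j * v j := by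
      refine (Finset.sum_subset (Finset.subset_univ s) ?_).symm
      intro x _ hx
      rw [hzero x hx, mul_zero]
    rw [h1, ← Finset.sum_coe_sort s (fun j => M i j * v j)]
    exact Fintype.sum_equiv e.toEquiv _ _ (fun x => rfl)
  -- kernel basis
  set W := LinearMap.ker (A.submatrix id c).mulVecLin with hW
  let t := Module.finrank K W
  let b : Module.Basis (Fin t) K W := Module.finBasis K W
  let Kb : Matrix (Fin k) (Fin t) K := Matrix.of fun i j => (b j : Fin k → K) i
  have hKb : ∀ x : Fin t → K, Kb.mulVecLin x = ∑ j, x j • ((b j : Fin k → K)) := by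
    intro x
    funext i
    simp [Kb, Matrix.mulVecLin, Matrix.mulVec, dotProduct, mul_comm]
  have hKbW : ∀ x : Fin t → K, Kb.mulVecLin x = ((∑ j, x j • b j : W) : Fin k → K) := by
    intro x
    rw [hKb]
    push_cast
    simp
  have hinj : Function.Injective Kb.mulVecLin := by
    intro x y hxy
    rw [hKbW, hKbW] at hxy
    have h2 : (∑ j, x j • b j : W) = ∑ j, y j • b j := Subtype.ext hxy
    have h3 : ∑ j, (x j - y j) • b j = 0 := by
      rw [Finset.sum_congr rfl (fun j _ => sub_smul (x j) (y j) (b j)),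
        Finset.sum_sub_distrib, h2, sub_self]
    have h4 := Fintype.linearIndependent_iff.mp b.linearIndependent _ h3
    funext j
    exact sub_eq_zero.mp (h4 j)
  have hrange : LinearMap.range Kb.mulVecLin = W := by
    apply le_antisymm
    · rintro _ ⟨x, rfl⟩
      rw [hKbW]
      exact (∑ j, x j • b j : W).2
    · intro w hw
      refine ⟨fun j => b.repr ⟨w, hw⟩ j, ?_⟩
      rw [hKbW]
      rw [b.sum_repr ⟨w, hw⟩]
  obtain ⟨i, hi⟩ := h k (hk ▸ hcard) c hc t Kb ⟨hinj, hrange⟩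
  have hv' : v' ∈ W := by
    show (A.submatrix id c).mulVecLin v' = 0
    show (A.submatrix id c).mulVec v' = 0
    rw [key A, hv]
  refine ⟨i, ?_⟩
  have hvv : v' = Kb.mulVec (fun j => b.repr ⟨v', hv'⟩ j) := by
    have := hKbW (fun j => b.repr ⟨v', hv'⟩ j)
    rw [b.sum_repr ⟨v', hv'⟩] at this
    exact this.symm
  calc B.mulVec v i = (B.submatrix id c).mulVec v' i := by rw [key B]
    _ = ((B.submatrix id c) * Kb).mulVec (fun j => b.repr ⟨v', hv'⟩ j) i := by
        rw [← Matrix.mulVec_mulVec, ← hvv]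
    _ = 0 := by
        simp only [Matrix.mulVec, dotProduct]
        exact Finset.sum_eq_zero fun j _ => by rw [hi j, zero_mul]
end

section
/- Let A ∈ K^{n×ℓ} and B ∈ K^{m×ℓ} over a field K with at least m+1 elements. Suppose that for every vector v in the right kernel of A with Hamming weight at most n, the vector B·v has at least one zero coordinate. Then for every selection P of at most n columns, the matrix B·P · kbasis(A·P) has at least one zero row, where kbasis(A·P) is any matrix whose columns form a basis of the right kernel of A·P. -/
open MvPolynomial in
/-- If each of `m` rows of `C` is nonzero and `#K ≥ m+1`, there is `w` with all
entries of `C.mulVec w` nonzero. -/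
lemma exists_mulVec_ne_zero {K : Type*} [Field K] {m t : ℕ}
    (hK : (m + 1 : Cardinal) ≤ Cardinal.mk K)
    (C : Matrix (Fin m) (Fin t) K) (hC : ∀ i, ∃ j, C i j ≠ 0) :
    ∃ w : Fin t → K, ∀ i, C.mulVec w i ≠ 0 := by
  set F : MvPolynomial (Fin t) K := ∏ i : Fin m, ∑ j : Fin t, MvPolynomial.C (C i j) * X j
    with hF
  have hhom : F.IsHomogeneous m := by
    have : F.IsHomogeneous (∑ _i : Fin m, 1) := by
      apply IsHomogeneous.prod
      intro i _
      apply IsHomogeneous.sum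
      intro j _
      simpa using (isHomogeneous_C _ (C i j)).mul (isHomogeneous_X K j)
    simpa using this
  have hF0 : F ≠ 0 := by
    rw [hF]
    apply Finset.prod_ne_zero_iff.mpr
    intro i _
    obtain ⟨j, hj⟩ := hC i
    intro hzero
    apply hj
    have := congrArg (MvPolynomial.coeff (Finsupp.single j 1)) hzero
    simpa [MvPolynomial.coeff_sum, MvPolynomial.coeff_C_mul, MvPolynomial.coeff_X',
      Finsupp.single_left_inj] using this
  have : ¬ ∀ r : Fin t → K, MvPolynomial.eval r F = 0 := by
    intro hall
    exact hF0 (hhom.eq_zero_of_forall_eval_eq_zero_of_le_card hall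
      (le_trans (by exact_mod_cast Nat.le_succ m) hK))
  push_neg at this
  obtain ⟨w, hw⟩ := this
  refine ⟨w, fun i hi => ?_⟩
  apply hw
  rw [hF, MvPolynomial.eval_prod]
  apply Finset.prod_eq_zero (Finset.mem_univ i)
  simpa [Matrix.mulVec, dotProduct] using hi

/-- safe(A,B) ⇒ safe′(A,B) over a field with at least `m+1` elements: if every
`v ∈ ker A` of Hamming weight at most `n` gives a zero coordinate in `B·v`,
then for every selection of at most `n` columns, the product of the selected
columns of `B` with a kernel basis of the selected columns of `A` has a zero
row. -/
theorem stmt7 {K : Type*} [Field K] [DecidableEq K] {n m ℓ : ℕ}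
    (hK : (m + 1 : Cardinal) ≤ Cardinal.mk K)
    (A : Matrix (Fin n) (Fin ℓ) K) (B : Matrix (Fin m) (Fin ℓ) K)
    (h : ∀ v : Fin ℓ → K, A.mulVec v = 0 →
      (Finset.univ.filter fun i => v i ≠ 0).card ≤ n →
      ∃ i, B.mulVec v i = 0) :
    ∀ (k : ℕ), k ≤ n → ∀ (c : Fin k → Fin ℓ), Function.Injective c →
      ∀ (t : ℕ) (Kb : Matrix (Fin k) (Fin t) K),
        IsKernelBasis (A.submatrix id c) Kb →
        ∃ i, ∀ j, ((B.submatrix id c) * Kb) i j = 0 := by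
  intro k hk c hc t Kb hKb
  by_contra hcon
  push_neg at hcon
  obtain ⟨w, hw⟩ := exists_mulVec_ne_zero hK ((B.submatrix id c) * Kb) hcon
  set u : Fin k → K := Kb.mulVec w with hu
  have hker : (A.submatrix id c).mulVec u = 0 := by
    have : u ∈ LinearMap.ker (A.submatrix id c).mulVecLin := by
      rw [← hKb.2]
      exact ⟨w, rfl⟩
    simpa using this
  set v : Fin ℓ → K := Function.extend c u 0 with hv
  have hv_range : ∀ j : Fin ℓ, j ∉ Finset.univ.image c → v j = 0 := by
    intro j hj
    rw [hv, Function.extend_apply']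
    · rfl
    · rintro ⟨i', rfl⟩
      exact hj (Finset.mem_image_of_mem c (Finset.mem_univ i'))
  have key : ∀ (q : ℕ) (M : Matrix (Fin q) (Fin ℓ) K),
      M.mulVec v = (M.submatrix id c).mulVec u := by
    intro q M
    funext i
    have h1 : ∑ j ∈ Finset.univ.image c, M i j * v j = ∑ j : Fin ℓ, M i j * v j := by
      apply Finset.sum_subset (Finset.subset_univ _)
      intro j _ hj
      rw [hv_range j hj, mul_zero]
    have h2 : ∑ j ∈ Finset.univ.image c, M i j * v j
        = ∑ i' : Fin k, M i (c i') * v (c i') :=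
      Finset.sum_image (fun a _ b _ hab => hc hab)
    have h3 : ∀ i', v (c i') = u i' := fun i' => hc.extend_apply u 0 i'
    simp only [Matrix.mulVec, dotProduct, Matrix.submatrix_apply, id]
    rw [← h1, h2]
    exact Finset.sum_congr rfl (fun i' _ => by rw [h3])
  have hA : A.mulVec v = 0 := by rw [key n A, hker]
  have hwt : (Finset.univ.filter fun i => v i ≠ 0).card ≤ n := by
    have hsub : (Finset.univ.filter fun i => v i ≠ 0) ⊆ Finset.univ.image c := by
      intro j hj
      simp only [Finset.mem_filter] at hj
      by_contra hjn
      exact hj.2 (hv_range j hjn)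
    calc (Finset.univ.filter fun i => v i ≠ 0).card
        ≤ (Finset.univ.image c).card := Finset.card_le_card hsub
      _ ≤ (Finset.univ : Finset (Fin k)).card := Finset.card_image_le
      _ = k := by simp
      _ ≤ n := hk
  obtain ⟨i, hi⟩ := h v hA hwt
  apply hw i
  rw [← Matrix.mulVec_mulVec, ← hu, ← key m B]
  exact hi
end
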